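/- arXiv:0903.5125 — 3 statements merged into one kernel-verified Lean document; each statement's English description precedes it below -/
import Mathlib

section
/- For every C > 0 and σ > 0 there exists τ₁ = τ₁(C,σ) > 0 such that: if u is harmonic on the unit disc D with u(z) ≤ C·log(e/(1−|z|)) for all z ∈ D, and for some θ ∈ [0,2π] and r ∈ (0,1) one has u(re^{iθ}) > σ·log(e/(1−r)), then u(re^{i(θ+δ)}) > (σ/2)·log(e/(1−r)) for all δ with |δ| < τ₁(1−r). -/
open Filter MeasureTheory Metric Set

set_option maxHeartbeats 1000000

noncomputable section

lemma borel_caratheodory {F : ℂ → ℂ} {z₀ : ℂ} {ρ A : ℝ} (hA : 0 < A)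
    (hF : DifferentiableOn ℂ F (ball z₀ ρ))
    (hRe : ∀ z ∈ ball z₀ ρ, (F z).re - (F z₀).re < A)
    {z : ℂ} (hz : z ∈ ball z₀ ρ) :
    ‖F z - F z₀‖ ≤ 2 * A * dist z z₀ / (ρ - dist z z₀) := by
  have hρ : 0 < ρ := pos_of_mem_ball hz
  set φ : ℂ → ℂ := fun w => F w - F z₀ with hφ
  have key : ∀ w ∈ ball z₀ ρ, ‖φ w‖ < ‖(2 * A : ℂ) - φ w‖ := by
    intro w hw
    have h1 : (φ w).re < A := by
      have := hRe w hw; simpa [hφ, Complex.sub_re] using this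
    rw [Complex.norm_def, Complex.norm_def]
    apply Real.sqrt_lt_sqrt (Complex.normSq_nonneg _)
    have : ((2 * A : ℂ) - φ w).re = 2 * A - (φ w).re := by simp
    have him : ((2 * A : ℂ) - φ w).im = -(φ w).im := by simp
    rw [Complex.normSq_apply, Complex.normSq_apply, this, him]
    nlinarith [hA]
  have hden : ∀ w ∈ ball z₀ ρ, (2 * A : ℂ) - φ w ≠ 0 := by
    intro w hw h
    have := key w hw
    rw [h] at this
    simp at this
    exact absurd this (not_lt_of_ge (norm_nonneg _))
  set g : ℂ → ℂ := fun w => φ w / ((2 * A : ℂ) - φ w) with hg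
  have hgd : DifferentiableOn ℂ g (ball z₀ ρ) :=
    (hF.sub (differentiableOn_const _)).div
      ((differentiableOn_const _).sub (hF.sub (differentiableOn_const _))) hden
  have hgz₀ : g z₀ = 0 := by simp [hg, hφ]
  have hmaps : MapsTo g (ball z₀ ρ) (ball (g z₀) 1) := by
    intro w hw
    rw [hgz₀, mem_ball, dist_zero_right, hg]
    simp only [norm_div]
    rw [div_lt_one (by
      have := key w hw
      exact lt_of_le_of_lt (norm_nonneg _) this)]
    exact key w hw
  have hschwarz : dist (g z) (g z₀) ≤ 1 / ρ * dist z z₀ :=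
    Complex.dist_le_div_mul_dist_of_mapsTo_ball hgd (hmaps.mono_right ball_subset_closedBall) hz
  rw [hgz₀, dist_zero_right] at hschwarz
  set d := dist z z₀ with hd
  have hdρ : d < ρ := mem_ball.mp hz
  have hd0 : 0 ≤ d := dist_nonneg
  have hgz : ‖g z‖ ≤ d / ρ := by
    linarith [hschwarz, (one_div_mul_eq_div ρ d)]
  -- φ z = 2A * g z / (1 + g z)
  have h1g : (1 : ℂ) + g z ≠ 0 := by
    intro h
    have : ‖g z‖ = 1 := by
      have : g z = -1 := by linear_combination h
      rw [this]; simp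
    rw [this] at hgz
    have : ρ ≤ d := by
      rw [le_div_iff₀ hρ, one_mul] at hgz; linarith
    linarith
  have hφg : φ z = 2 * A * g z / (1 + g z) := by
    have hdz := hden z hz
    have hA0 : (A:ℂ) ≠ 0 := Complex.ofReal_ne_zero.mpr hA.ne'
    rw [hg]
    field_simp
    ring
  have habs1g : (ρ - d) / ρ ≤ ‖1 + g z‖ := by
    have h2 : ‖1 + g z‖ ≥ 1 - ‖g z‖ := by
      have := norm_add_le (1 + g z) (-(g z))
      simp only [add_neg_cancel_right, norm_one, norm_neg] at this
      linarith
    have : 1 - ‖g z‖ ≥ 1 - d / ρ := by linarith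
    calc (ρ - d) / ρ = 1 - d / ρ := by field_simp
      _ ≤ 1 - ‖g z‖ := by linarith
      _ ≤ ‖1 + g z‖ := h2
  calc ‖F z - F z₀‖ = ‖φ z‖ := rfl
    _ = 2 * A * ‖g z‖ / ‖1 + g z‖ := by
        rw [hφg]; simp [norm_div, norm_mul, Complex.norm_real, abs_of_pos hA]
    _ ≤ 2 * A * (d / ρ) / ((ρ - d) / ρ) := by
        apply div_le_div₀ (by positivity) (by nlinarith [norm_nonneg (g z)])
          (div_pos (by linarith) hρ) habs1g
    _ = 2 * A * d / (ρ - d) := by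
        field_simp


/-- `u` is harmonic on the open unit disc; on the (simply connected) disc this is
equivalent to `u` being the real part of a holomorphic function. -/
def HarmonicOnDisc (u : ℂ → ℝ) : Prop :=
  ∃ F : ℂ → ℂ, DifferentiableOn ℂ F (Metric.ball 0 1) ∧
    ∀ z ∈ Metric.ball (0:ℂ) 1, u z = (F z).re

/-- For every `C, σ > 0` there is `τ₁ = τ₁(C,σ) > 0` such that: if `u` is harmonic on the
unit disc with `u(z) ≤ C log(e/(1-|z|))`, `θ ∈ [0, 2π]`, `r ∈ (0,1)` and
`u(re^{iθ}) > σ log(e/(1-r))`, then `u(re^{i(θ+δ)}) > (σ/2) log(e/(1-r))` whenever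
`|δ| < τ₁ (1-r)`. -/
theorem stmt9 (C σ : ℝ) (hC : 0 < C) (hσ : 0 < σ) :
    ∃ τ₁ : ℝ, 0 < τ₁ ∧
      ∀ u : ℂ → ℝ, HarmonicOnDisc u →
        (∀ z ∈ Metric.ball (0:ℂ) 1, u z ≤ C * Real.log (Real.exp 1 / (1 - ‖z‖))) →
        ∀ θ ∈ Set.Icc (0:ℝ) (2 * Real.pi), ∀ r ∈ Set.Ioo (0:ℝ) 1,
          σ * Real.log (Real.exp 1 / (1 - r)) <
              u ((r : ℂ) * Complex.exp (Complex.I * (θ : ℂ))) →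
          ∀ δ : ℝ, |δ| < τ₁ * (1 - r) →
            σ / 2 * Real.log (Real.exp 1 / (1 - r)) <
              u ((r : ℂ) * Complex.exp (Complex.I * ((θ + δ : ℝ) : ℂ))) := by
  refine ⟨min (1/8) (σ / (64 * C)), lt_min (by norm_num) (by positivity), ?_⟩
  set τ₁ := min (1/8) (σ / (64 * C)) with hτdef
  have hτpos : 0 < τ₁ := lt_min (by norm_num) (by positivity)
  have hτ1 : τ₁ ≤ 1/8 := min_le_left _ _
  have hτC : 64 * C * τ₁ ≤ σ := by
    have := (le_div_iff₀ (by positivity : (0:ℝ) < 64 * C)).mp (min_le_right (1/8) (σ / (64 * C)))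
    linarith
  rintro u hharm hub θ hθ r ⟨hr0, hr1⟩ hbig δ hδ
  rw [HarmonicOnDisc] at hharm
  obtain ⟨F, hFd, hFu⟩ := hharm
  set L := Real.log (Real.exp 1 / (1 - r)) with hLdef
  have h1r : 0 < 1 - r := by linarith
  have hL : L = 1 - Real.log (1 - r) := by
    rw [hLdef, Real.log_div (Real.exp_ne_zero 1) h1r.ne', Real.log_exp]
  have hL1 : 1 ≤ L := by
    rw [hL]
    have := Real.log_nonpos (by linarith) (by linarith : 1 - r ≤ 1)
    linarith
  set ρ := (1 - r) / 2 with hρdef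
  have hρ : 0 < ρ := by positivity
  set z₀ := (r : ℂ) * Complex.exp (Complex.I * (θ : ℂ)) with hz₀def
  set z := (r : ℂ) * Complex.exp (Complex.I * ((θ + δ : ℝ) : ℂ)) with hzdef
  have habs_exp : ∀ t : ℝ, ‖Complex.exp (Complex.I * (t : ℂ))‖ = 1 := by
    intro t; rw [Complex.norm_exp]; simp
  have hz₀abs : ‖z₀‖ = r := by
    rw [hz₀def, norm_mul, habs_exp, Complex.norm_real, Real.norm_eq_abs, abs_of_pos hr0, mul_one]
  -- the ball around z₀ is inside the unit disc, with norms < (1+r)/2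
  have hball : ∀ w ∈ ball z₀ ρ, ‖w‖ < r + ρ := by
    intro w hw
    have h1 : ‖w - z₀‖ < ρ := by
      rw [← Complex.dist_eq]; exact mem_ball.mp hw
    have := norm_add_le (w - z₀) z₀
    simp only [sub_add_cancel] at this
    rw [hz₀abs] at this
    linarith
  have hsub : ball z₀ ρ ⊆ ball (0:ℂ) 1 := by
    intro w hw
    rw [mem_ball, dist_zero_right]
    have := hball w hw
    rw [hρdef] at this
    linarith
  set M := C * Real.log (Real.exp 1 / ρ) with hMdef
  -- u < M on the ball
  have hMb : ∀ w ∈ ball z₀ ρ, u w < M := by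
    intro w hw
    have hw1 := hsub hw
    have h1 := hub w hw1
    have hnw : (1:ℝ) - ‖w‖ > ρ := by
      have := hball w hw
      rw [hρdef] at *
      linarith
    have hlog : Real.log (Real.exp 1 / (1 - ‖w‖)) < Real.log (Real.exp 1 / ρ) := by
      apply Real.log_lt_log (div_pos (Real.exp_pos 1) (by linarith))
      exact div_lt_div_of_pos_left (Real.exp_pos 1) hρ hnw
    calc u w ≤ C * Real.log (Real.exp 1 / (1 - ‖w‖)) := h1
      _ < M := by rw [hMdef]; exact (mul_lt_mul_iff_right₀ hC).mpr hlog
  have hM2 : M ≤ 2 * C * L := by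
    have hlogρ : Real.log ρ = Real.log (1 - r) - Real.log 2 := by
      rw [hρdef, Real.log_div h1r.ne' (by norm_num)]
    have hlog2 : Real.log 2 ≤ 1 := by
      have := Real.log_le_sub_one_of_pos (by norm_num : (0:ℝ) < 2)
      linarith
    have : Real.log (Real.exp 1 / ρ) = 1 - Real.log ρ := by
      rw [Real.log_div (Real.exp_ne_zero 1) hρ.ne', Real.log_exp]
    rw [hMdef, this, hlogρ]
    have : 1 - (Real.log (1 - r) - Real.log 2) ≤ L + 1 := by rw [hL]; linarith
    nlinarith
  have hz₀mem : z₀ ∈ ball z₀ ρ := mem_ball_self hρ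
  have hz₀u : σ * L < u z₀ := hbig
  have huz₀pos : 0 < u z₀ := lt_trans (by positivity) hz₀u
  set A := M - u z₀ with hAdef
  have hApos : 0 < A := by have := hMb z₀ hz₀mem; rw [hAdef]; linarith
  have hA2 : A < 2 * C * L := by rw [hAdef]; linarith
  -- distance estimate
  have hδ1 : ‖Complex.I * (δ : ℂ)‖ ≤ 1 := by
    rw [norm_mul, Complex.norm_I, one_mul, Complex.norm_real, Real.norm_eq_abs]
    have : τ₁ * (1 - r) ≤ 1 := by nlinarith
    linarith [hδ, this]
  have hzz : z - z₀ = (r:ℂ) * Complex.exp (Complex.I * (θ:ℂ)) *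
      (Complex.exp (Complex.I * (δ:ℂ)) - 1) := by
    rw [hzdef, hz₀def]
    push_cast
    rw [mul_add, Complex.exp_add]
    ring
  have hd : dist z z₀ < 4 * τ₁ * ρ := by
    rw [Complex.dist_eq, hzz, norm_mul, norm_mul, habs_exp, Complex.norm_real, Real.norm_eq_abs,
      abs_of_pos hr0, mul_one]
    have h1 : ‖Complex.exp (Complex.I * (δ:ℂ)) - 1‖ ≤
        2 * ‖Complex.I * (δ:ℂ)‖ := Complex.norm_exp_sub_one_le hδ1
    rw [norm_mul, Complex.norm_I, one_mul, Complex.norm_real, Real.norm_eq_abs] at h1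
    have : r * ‖Complex.exp (Complex.I * (δ:ℂ)) - 1‖ ≤ 2 * |δ| := by
      nlinarith [norm_nonneg (Complex.exp (Complex.I * (δ:ℂ)) - 1)]
    have h2 : 2 * |δ| < 2 * τ₁ * (1 - r) := by linarith
    rw [hρdef]
    linarith
  set d := dist z z₀ with hddef
  have hd0 : 0 ≤ d := dist_nonneg
  have hτ4 : 4 * τ₁ ≤ 1/2 := by linarith
  have hdhalf : d < ρ / 2 := by nlinarith
  have hzmem : z ∈ ball z₀ ρ := by rw [mem_ball]; linarith
  -- apply Borel–Carathéodory to F on ball z₀ ρ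
  have hFd' : DifferentiableOn ℂ F (ball z₀ ρ) := hFd.mono hsub
  have hRe : ∀ w ∈ ball z₀ ρ, (F w).re - (F z₀).re < A := by
    intro w hw
    have h1 : u w = (F w).re := hFu w (hsub hw)
    have h2 : u z₀ = (F z₀).re := hFu z₀ (hsub hz₀mem)
    have := hMb w hw
    rw [hAdef, ← h1, ← h2]
    linarith
  have hBC := borel_caratheodory hApos hFd' hRe hzmem
  rw [← hddef] at hBC
  -- final estimate
  have hdC : 16 * C * d ≤ σ * ρ := by
    have h1 : 16 * C * d ≤ 16 * C * (4 * τ₁ * ρ) :=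
      mul_le_mul_of_nonneg_left hd.le (by positivity)
    have h2 : 64 * C * τ₁ * ρ ≤ σ * ρ := mul_le_mul_of_nonneg_right hτC hρ.le
    calc 16 * C * d ≤ 16 * C * (4 * τ₁ * ρ) := h1
      _ = 64 * C * τ₁ * ρ := by ring
      _ ≤ σ * ρ := h2
  have hkey : 2 * A * d / (ρ - d) ≤ σ / 2 * L := by
    rw [div_le_iff₀ (by linarith : (0:ℝ) < ρ - d)]
    have e1 : 2 * A * d ≤ 4 * C * L * d := by
      nlinarith [mul_le_mul_of_nonneg_right hA2.le hd0]
    have e2 : 16 * C * (L * d) ≤ σ * (L * ρ) := by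
      nlinarith [mul_le_mul_of_nonneg_left hdC (by linarith : (0:ℝ) ≤ L)]
    have e3 : σ * (L * ρ) / 4 ≤ σ / 2 * L * (ρ - d) := by
      nlinarith [mul_nonneg (mul_nonneg hσ.le (by linarith : (0:ℝ) ≤ L))
        (by linarith : (0:ℝ) ≤ ρ - 2 * d)]
    have e4 : 4 * (C * (L * d)) = 16 * C * (L * d) / 4 := by ring
    nlinarith [e1, e2, e3]
  have hre : u z₀ - u z ≤ ‖F z - F z₀‖ := by
    have h1 : u z = (F z).re := hFu z (hsub hzmem)
    have h2 : u z₀ = (F z₀).re := hFu z₀ (hsub hz₀mem)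
    rw [h1, h2]
    have h3 := Complex.abs_re_le_norm (F z - F z₀)
    rw [Complex.sub_re] at h3
    have h4 := neg_le_abs ((F z).re - (F z₀).re)
    linarith
  have : u z₀ - u z ≤ σ / 2 * L := le_trans hre (le_trans hBC hkey)
  linarith
end
end

section
/- Let P(re^{iθ}) = (1/2π)·(1−r²)/(1−2r·cos θ + r²) denote the Poisson kernel. If r ∈ (0,1), τ ∈ (0,1), and 0 < δ < τ(1−r), then for every θ, P(re^{iθ}) > (1−τ)·P(re^{i(θ+δ)}). -/
noncomputable section

/-- The Poisson kernel `P(re^{iθ}) = (1/2π) (1-r²)/(1-2r cos θ + r²)`. -/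
def diskPoissonKernel (r θ : ℝ) : ℝ :=
  (1 / (2 * Real.pi)) * (1 - r ^ 2) / (1 - 2 * r * Real.cos θ + r ^ 2)

lemma denom_pos {r : ℝ} (hr0 : 0 < r) (hr1 : r < 1) (t : ℝ) :
    0 < 1 - 2 * r * Real.cos t + r ^ 2 := by
  nlinarith [Real.cos_le_one t, sq_nonneg (1 - r)]

/-- key pointwise bound: `(1-r²)|sin t| ≤ D t`. -/
lemma sin_bound {r : ℝ} (hr0 : 0 < r) (hr1 : r < 1) (t : ℝ) :
    (1 - r ^ 2) * |Real.sin t| ≤ 1 - 2 * r * Real.cos t + r ^ 2 := by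
  have h1 := Real.sin_sq_add_cos_sq t
  have h2 : 0 ≤ ((1 + r ^ 2) * Real.cos t - 2 * r) ^ 2 := sq_nonneg _
  have hD := denom_pos hr0 hr1 t
  have habs : |Real.sin t| ^ 2 = Real.sin t ^ 2 := sq_abs _
  have hX : 0 ≤ (1 - r ^ 2) * |Real.sin t| := by
    have : 0 < 1 - r ^ 2 := by nlinarith
    positivity
  refine le_of_pow_le_pow_left₀ (n := 2) two_ne_zero hD.le ?_
  rw [mul_pow, sq_abs]
  nlinarith [h2, h1, sq_nonneg (1 - r ^ 2)]

/-- The denominator ratio bound. -/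
lemma denom_ratio {r τ δ : ℝ} (hr : r ∈ Set.Ioo (0:ℝ) 1) (hτ : τ ∈ Set.Ioo (0:ℝ) 1)
    (hδ0 : 0 < δ) (hδ : δ < τ * (1 - r)) (θ : ℝ) :
    (1 - τ) * (1 - 2 * r * Real.cos θ + r ^ 2) < 1 - 2 * r * Real.cos (θ + δ) + r ^ 2 := by
  obtain ⟨hr0, hr1⟩ := hr
  obtain ⟨hτ0, hτ1⟩ := hτ
  set D : ℝ → ℝ := fun t => 1 - 2 * r * Real.cos t + r ^ 2 with hDdef
  have hDpos : ∀ t, 0 < D t := denom_pos hr0 hr1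
  set f : ℝ → ℝ := fun t => Real.log (D t) with hfdef
  have hderiv : ∀ t : ℝ, HasDerivAt f (2 * r * Real.sin t / D t) t := by
    intro t
    have h1 : HasDerivAt D (2 * r * Real.sin t) t := by
      have hc : HasDerivAt (fun t : ℝ => Real.cos t) (-Real.sin t) t := Real.hasDerivAt_cos t
      have h : HasDerivAt (fun t : ℝ => 1 - 2 * r * Real.cos t + r ^ 2)
          (0 - (0 * Real.cos t + 2 * r * -Real.sin t) + 0) t := (((hasDerivAt_const t (1:ℝ)).sub ((hasDerivAt_const t (2*r)).mul hc)).add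
          (hasDerivAt_const t (r^2)))
      convert h using 1
      ring
    exact h1.log (ne_of_gt (hDpos t))
  -- mean value theorem on [θ, θ+δ]
  have hlt : θ < θ + δ := by linarith
  obtain ⟨c, _, hc⟩ := exists_hasDerivAt_eq_slope f (fun t => 2 * r * Real.sin t / D t) hlt
    (fun t _ => (hderiv t).continuousAt.continuousWithinAt)
    (fun t _ => hderiv t)
  -- bound the derivative at c from below
  set L : ℝ := 2 * r / (1 - r ^ 2) with hL
  have hr2 : 0 < 1 - r ^ 2 := by nlinarith
  have hLpos : 0 < L := by positivity
  have hLr : L * (1 - r ^ 2) = 2 * r := by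
    rw [hL]; field_simp
  have hbound : -L ≤ 2 * r * Real.sin c / D c := by
    rw [le_div_iff₀ (hDpos c)]
    have h2 := mul_le_mul_of_nonneg_left (sin_bound hr0 hr1 c) hLpos.le
    have h3 := neg_abs_le (Real.sin c)
    have h4 : 2 * r * |Real.sin c| ≤ L * D c := by
      calc 2 * r * |Real.sin c| = L * ((1 - r ^ 2) * |Real.sin c|) := by
            rw [← hLr]; ring
        _ ≤ L * D c := h2
    have h5 : 2 * r * -|Real.sin c| ≤ 2 * r * Real.sin c :=
      mul_le_mul_of_nonneg_left h3 (by positivity)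
    linarith
  have hslope : f (θ + δ) - f θ = δ * (2 * r * Real.sin c / D c) := by
    rw [hc, show θ + δ - θ = δ by ring]
    field_simp
  have hdiff : -(δ * L) ≤ f (θ + δ) - f θ := by
    rw [hslope]
    have := mul_le_mul_of_nonneg_left hbound (le_of_lt hδ0)
    linarith
  -- δ * L < τ
  have hδL : δ * L < τ := by
    rw [hL, mul_div_assoc']
    rw [div_lt_iff₀ hr2]
    nlinarith [mul_pos hτ0 (show (0:ℝ) < 1 - r by linarith), sq_nonneg (1 - r)]
  -- exponentiate
  have hexp : D (θ + δ) = D θ * Real.exp (f (θ + δ) - f θ) := by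
    rw [hfdef]
    simp only
    rw [Real.exp_sub, Real.exp_log (hDpos (θ + δ)), Real.exp_log (hDpos θ)]
    rw [mul_div_assoc']
    exact (mul_div_cancel_left₀ _ (ne_of_gt (hDpos θ))).symm
  have h1τ : (1 : ℝ) - τ < Real.exp (f (θ + δ) - f θ) := by
    have h1 : 1 - δ * L < Real.exp (-(δ * L)) := by
      have := Real.add_one_lt_exp (x := -(δ * L)) (by
        intro h
        have : δ * L = 0 := by linarith [neg_eq_zero.mp h]
        nlinarith)
      linarith
    have h2 : Real.exp (-(δ * L)) ≤ Real.exp (f (θ + δ) - f θ) := Real.exp_le_exp.mpr hdiff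
    linarith
  have := hDpos θ
  calc (1 - τ) * D θ < Real.exp (f (θ + δ) - f θ) * D θ := by
        apply mul_lt_mul_of_pos_right h1τ (hDpos θ)
    _ = D (θ + δ) := by rw [hexp]; ring

/-- If `r ∈ (0,1)`, `τ ∈ (0,1)` and `0 < δ < τ(1-r)`, then
`P(re^{iθ}) > (1-τ) P(re^{i(θ+δ)})` for every `θ`. -/
theorem stmt11 (r τ δ : ℝ) (hr : r ∈ Set.Ioo (0:ℝ) 1) (hτ : τ ∈ Set.Ioo (0:ℝ) 1)
    (hδ0 : 0 < δ) (hδ : δ < τ * (1 - r)) (θ : ℝ) :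
    (1 - τ) * diskPoissonKernel r (θ + δ) < diskPoissonKernel r θ := by
  obtain ⟨hr0, hr1⟩ := hr
  obtain ⟨hτ0, hτ1⟩ := hτ
  have hD1 := denom_pos hr0 hr1 θ
  have hD2 := denom_pos hr0 hr1 (θ + δ)
  have hratio := denom_ratio ⟨hr0, hr1⟩ ⟨hτ0, hτ1⟩ hδ0 hδ θ
  have hN : 0 < (1 / (2 * Real.pi)) * (1 - r ^ 2) := by
    have : 0 < 1 - r ^ 2 := by nlinarith
    have := Real.pi_pos
    positivity
  unfold diskPoissonKernel
  rw [mul_div_assoc', div_lt_div_iff₀ hD2 hD1]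
  nlinarith [mul_lt_mul_of_pos_left hratio hN]
end
end

section
/- For each integer A ≥ 2 the series Σ_{k=0}^∞ A^k z^{2^{A^k}} converges for every z in the unit disc D, and there exists a constant C (depending on A) such that the function u(z) = Re Σ_{k=0}^∞ A^k z^{2^{A^k}} satisfies |u(z)| ≤ C·log(e/(1−|z|)) for all z ∈ D. -/
open Filter

noncomputable section

private lemma nat_le_two_pow_pred {m : ℕ} (hm : 1 ≤ m) : m ≤ 2 ^ (m - 1) := by
  have h := Nat.lt_two_pow_self (n := m - 1)
  omega

private lemma geom_le_pow (A : ℕ) (hA : 2 ≤ A) : ∀ K : ℕ, (∑ i ∈ Finset.range K, A ^ i) ≤ A ^ K := by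
  intro K
  induction K with
  | zero => simp
  | succ n ih =>
    rw [Finset.sum_range_succ, pow_succ]
    nlinarith [pow_pos (show 0 < A by omega) n]

private lemma key_summable (A : ℕ) (hA : 2 ≤ A) (r : ℝ) (hr0 : 0 ≤ r) (hr1 : r < 1) :
    Summable fun k : ℕ => (A : ℝ) ^ k * r ^ 2 ^ A ^ k := by
  have h1 : Summable fun n : ℕ => (n : ℝ) * r ^ n := by
    have := summable_pow_mul_geometric_of_norm_lt_one (R := ℝ) (r := r) 1
      (by rwa [Real.norm_eq_abs, abs_of_nonneg hr0])
    simpa using this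
  have hmono : StrictMono fun k : ℕ => 2 ^ A ^ k := by
    intro a b hab
    exact Nat.pow_lt_pow_right one_lt_two (Nat.pow_lt_pow_right (by omega) hab)
  have h2 : Summable fun k : ℕ => ((2 ^ A ^ k : ℕ) : ℝ) * r ^ (2 ^ A ^ k) :=
    h1.comp_injective hmono.injective
  refine h2.of_nonneg_of_le (fun k => ?_) (fun k => ?_)
  · positivity
  · have hle : (A : ℝ) ^ k ≤ ((2 ^ A ^ k : ℕ) : ℝ) := by
      rw [← Nat.cast_pow]
      exact_mod_cast (Nat.lt_two_pow_self (n := A ^ k)).le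
    exact mul_le_mul_of_nonneg_right hle (pow_nonneg hr0 _)

set_option maxHeartbeats 2000000 in
private lemma key_bound (A : ℕ) (hA : 2 ≤ A) (r : ℝ) (hr0 : 0 ≤ r) (hr1 : r < 1) :
    ∑' k : ℕ, (A : ℝ) ^ k * r ^ 2 ^ A ^ k ≤ (6 * A) * Real.log (Real.exp 1 / (1 - r)) := by
  set s : ℝ := 1 - r with hs
  have hs0 : 0 < s := by rw [hs]; linarith
  have hs1 : s ≤ 1 := by rw [hs]; linarith
  set L : ℝ := Real.log (Real.exp 1 / (1 - r)) with hL
  have hLe : L = 1 - Real.log s := by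
    rw [hL, Real.log_div (Real.exp_ne_zero 1) (ne_of_gt hs0), Real.log_exp]
  have hL1 : 1 ≤ L := by
    have : Real.log s ≤ 0 := Real.log_nonpos hs0.le hs1
    rw [hLe]; linarith
  -- the splitting index K
  have hex : ∃ k, 1 < s * ((2 ^ A ^ k : ℕ) : ℝ) := by
    obtain ⟨n, hn⟩ := pow_unbounded_of_one_lt (1 / s) (one_lt_two (α := ℝ))
    refine ⟨n, ?_⟩
    have hn' : n ≤ A ^ n := (Nat.lt_pow_self (n := n) (by omega)).le
    have h1 : (2 : ℝ) ^ n ≤ ((2 ^ A ^ n : ℕ) : ℝ) := by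
      have : (2:ℕ) ^ n ≤ 2 ^ A ^ n := Nat.pow_le_pow_right (by norm_num) hn'
      exact_mod_cast this
    have h2 : 1 / s < ((2 ^ A ^ n : ℕ) : ℝ) := lt_of_lt_of_le hn h1
    rw [div_lt_iff₀ hs0] at h2
    linarith [mul_comm s ((2 ^ A ^ n : ℕ) : ℝ)]
  obtain ⟨K, hKspec, hKmin⟩ : ∃ K : ℕ, 1 < s * ((2 ^ A ^ K : ℕ) : ℝ) ∧
      ∀ k < K, s * ((2 ^ A ^ k : ℕ) : ℝ) ≤ 1 :=
    ⟨Nat.find hex, Nat.find_spec hex, fun k hk => le_of_not_gt (Nat.find_min hex hk)⟩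
  clear hex
  have hA2 : (2 : ℝ) ≤ A := by exact_mod_cast hA
  -- A^K ≤ 2 A L
  have hAK : (A : ℝ) ^ K ≤ 2 * A * L := by
    rcases Nat.eq_zero_or_pos K with h0 | hpos
    · rw [h0, pow_zero]
      nlinarith
    · obtain ⟨k, hKeq⟩ : ∃ k, K = k + 1 := ⟨K - 1, by omega⟩
      have hk := hKmin k (by omega)
      have hNpos : (0 : ℝ) < ((2 ^ A ^ k : ℕ) : ℝ) := by positivity
      have hNle : ((2 ^ A ^ k : ℕ) : ℝ) ≤ 1 / s := by
        rw [le_div_iff₀ hs0]; linarith [mul_comm ((2 ^ A ^ k : ℕ) : ℝ) s]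
      have hlog : (A : ℝ) ^ k * Real.log 2 ≤ -Real.log s := by
        have h3 := Real.log_le_log hNpos hNle
        rw [Nat.cast_pow, Nat.cast_ofNat, Real.log_pow, Real.log_div one_ne_zero hs0.ne',
          Real.log_one, zero_sub] at h3
        push_cast at h3
        exact h3
      have hlog2 : (1 : ℝ) / 2 ≤ Real.log 2 := by
        have := Real.log_two_gt_d9; linarith
      have hAk : (A : ℝ) ^ k ≤ 2 * L := by
        have h1 : (A : ℝ) ^ k * (1 / 2) ≤ (A : ℝ) ^ k * Real.log 2 :=
          mul_le_mul_of_nonneg_left hlog2 (by positivity)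
        have h2 : -Real.log s ≤ L := by rw [hLe]; linarith
        linarith
      rw [hKeq]
      calc (A : ℝ) ^ (k + 1) = A * (A : ℝ) ^ k := by ring
        _ ≤ A * (2 * L) := mul_le_mul_of_nonneg_left hAk (by positivity)
        _ = 2 * A * L := by ring
  have hsum := key_summable A hA r hr0 hr1
  -- split the sum
  rw [← Summable.sum_add_tsum_nat_add K hsum]
  -- head bound
  have hhead : (∑ i ∈ Finset.range K, (A : ℝ) ^ i * r ^ 2 ^ A ^ i) ≤ (A : ℝ) ^ K := by
    calc (∑ i ∈ Finset.range K, (A : ℝ) ^ i * r ^ 2 ^ A ^ i)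
        ≤ ∑ i ∈ Finset.range K, (A : ℝ) ^ i := by
          apply Finset.sum_le_sum
          intro i _
          have h1 : r ^ 2 ^ A ^ i ≤ 1 := pow_le_one₀ hr0 hr1.le
          nlinarith [pow_nonneg (show (0:ℝ) ≤ A by positivity) i]
      _ ≤ (A : ℝ) ^ K := by
          have := geom_le_pow A hA K
          push_cast
          exact_mod_cast this
  -- tail pointwise bound
  have hr_exp : r ≤ Real.exp (-s) := by
    have := Real.add_one_le_exp (-s)
    rw [hs] at *
    linarith
  have htail_pt : ∀ j : ℕ, (A : ℝ) ^ (j + K) * r ^ 2 ^ A ^ (j + K) ≤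
      (A : ℝ) ^ K * (((A ^ j : ℕ) : ℝ) * Real.exp (-1) ^ (A ^ j)) := by
    intro j
    have hm1 : 1 ≤ A ^ j := Nat.one_le_pow _ _ (by omega)
    -- s * 2^(A^(j+K)) ≥ A^j
    have hsN : ((A ^ j : ℕ) : ℝ) ≤ s * ((2 ^ A ^ (j + K) : ℕ) : ℝ) := by
      have hexp : A ^ (j + K) = A ^ K * A ^ j := by rw [pow_add, mul_comm]
      have hcast : ((2 ^ A ^ (j + K) : ℕ) : ℝ) = ((2 ^ A ^ K : ℕ) : ℝ) ^ A ^ j := by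
        rw [hexp, pow_mul]
        push_cast
        ring
      rw [hcast]
      set B : ℝ := ((2 ^ A ^ K : ℕ) : ℝ) with hB
      have hB2 : (2 : ℝ) ≤ B := by
        rw [hB]
        have h2 : (2:ℕ) ^ 1 ≤ 2 ^ A ^ K :=
          Nat.pow_le_pow_right (by norm_num) (Nat.one_le_pow _ _ (by omega))
        exact_mod_cast h2
      have hBsplit : B ^ A ^ j = B * B ^ (A ^ j - 1) := by
        rw [← pow_succ']
        congr 1
        omega
      calc ((A ^ j : ℕ) : ℝ) ≤ ((2 ^ (A ^ j - 1) : ℕ) : ℝ) := by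
            exact_mod_cast nat_le_two_pow_pred hm1
        _ = (2:ℝ) ^ (A ^ j - 1) := by push_cast; ring
        _ ≤ B ^ (A ^ j - 1) := pow_le_pow_left₀ (by norm_num) hB2 _
        _ = 1 * B ^ (A ^ j - 1) := (one_mul _).symm
        _ ≤ (s * B) * B ^ (A ^ j - 1) :=
            mul_le_mul_of_nonneg_right hKspec.le (by positivity)
        _ = s * B ^ A ^ j := by rw [hBsplit]; ring
    have hrN : r ^ 2 ^ A ^ (j + K) ≤ Real.exp (-1) ^ A ^ j := by
      calc r ^ 2 ^ A ^ (j + K) ≤ (Real.exp (-s)) ^ 2 ^ A ^ (j + K) :=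
            pow_le_pow_left₀ hr0 hr_exp _
        _ = Real.exp (-(s * ((2 ^ A ^ (j + K) : ℕ) : ℝ))) := by
            rw [← Real.exp_nat_mul]
            congr 1
            push_cast
            ring
        _ ≤ Real.exp (-((A ^ j : ℕ) : ℝ)) := by
            apply Real.exp_le_exp.mpr
            linarith
        _ = Real.exp (-1) ^ A ^ j := by
            rw [← Real.exp_nat_mul]
            congr 1
            push_cast
            ring
    calc (A : ℝ) ^ (j + K) * r ^ 2 ^ A ^ (j + K)
        = (A : ℝ) ^ K * ((A : ℝ) ^ j * r ^ 2 ^ A ^ (j + K)) := by rw [pow_add]; ring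
      _ ≤ (A : ℝ) ^ K * (((A ^ j : ℕ) : ℝ) * Real.exp (-1) ^ (A ^ j)) := by
          have hc : (A : ℝ) ^ j = ((A ^ j : ℕ) : ℝ) := by push_cast; ring
          rw [hc]
          apply mul_le_mul_of_nonneg_left _ (by positivity)
          exact mul_le_mul_of_nonneg_left hrN (by positivity)
  -- tail sum bound
  have hnorm : ‖Real.exp (-1)‖ < 1 := by
    rw [Real.norm_eq_abs, abs_of_pos (Real.exp_pos _)]
    exact Real.exp_lt_one_iff.mpr (by norm_num)
  have hg : Summable (fun m : ℕ => (m : ℝ) * Real.exp (-1) ^ m) := by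
    simpa using summable_pow_mul_geometric_of_norm_lt_one (R := ℝ) 1 hnorm
  have hinj : Function.Injective fun j : ℕ => A ^ j := fun a b h =>
    Nat.pow_right_injective hA h
  have hgi : Summable (fun j : ℕ => ((A ^ j : ℕ) : ℝ) * Real.exp (-1) ^ (A ^ j)) :=
    hg.comp_injective hinj
  have hsum' : Summable fun j : ℕ => (A : ℝ) ^ (j + K) * r ^ 2 ^ A ^ (j + K) :=
    (summable_nat_add_iff K).mpr hsum
  have htail : (∑' j : ℕ, (A : ℝ) ^ (j + K) * r ^ 2 ^ A ^ (j + K)) ≤ (A : ℝ) ^ K * 2 := by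
    calc (∑' j : ℕ, (A : ℝ) ^ (j + K) * r ^ 2 ^ A ^ (j + K))
        ≤ ∑' j : ℕ, (A : ℝ) ^ K * (((A ^ j : ℕ) : ℝ) * Real.exp (-1) ^ (A ^ j)) :=
          Summable.tsum_le_tsum htail_pt hsum' (hgi.mul_left _)
      _ = (A : ℝ) ^ K * ∑' j : ℕ, ((A ^ j : ℕ) : ℝ) * Real.exp (-1) ^ (A ^ j) :=
          tsum_mul_left
      _ ≤ (A : ℝ) ^ K * 2 := by
          apply mul_le_mul_of_nonneg_left _ (by positivity)
          have h1 : (∑' j : ℕ, ((A ^ j : ℕ) : ℝ) * Real.exp (-1) ^ (A ^ j)) ≤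
              ∑' m : ℕ, (m : ℝ) * Real.exp (-1) ^ m :=
            Summable.tsum_le_tsum_of_inj (fun j => A ^ j) hinj
              (fun c _ => by positivity) (fun j => le_rfl) hgi hg
          have h2 : (∑' m : ℕ, (m : ℝ) * Real.exp (-1) ^ m) ≤ 2 := by
            rw [tsum_coe_mul_geometric_of_norm_lt_one hnorm]
            have he : Real.exp (-1) ≤ 1 / 2 := by
              rw [Real.exp_neg]
              have h3 : (2:ℝ) ≤ Real.exp 1 := by
                have := Real.exp_one_gt_d9; linarith
              have h4 := inv_anti₀ (by norm_num : (0:ℝ) < 2) h3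
              linarith
            have hp : 0 < Real.exp (-1) := Real.exp_pos _
            rw [div_le_iff₀ (by nlinarith)]
            nlinarith
          linarith
  linarith

/-- For each integer `A ≥ 2`, the series `Σ_{k≥0} A^k z^{2^{A^k}}` converges for every `z`
in the unit disc and `u(z) = Re Σ_{k≥0} A^k z^{2^{A^k}}` satisfies
`|u(z)| ≤ C log(e/(1-|z|))` for some constant `C = C(A)`. -/
theorem stmt14 (A : ℕ) (hA : 2 ≤ A) :
    (∀ z ∈ Metric.ball (0:ℂ) 1, Summable fun n : ℕ => (A : ℂ) ^ n * z ^ 2 ^ A ^ n) ∧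
      ∃ C : ℝ, 0 < C ∧ ∀ z ∈ Metric.ball (0:ℂ) 1,
        |(∑' n : ℕ, (A : ℂ) ^ n * z ^ 2 ^ A ^ n).re| ≤
          C * Real.log (Real.exp 1 / (1 - ‖z‖)) := by
  have hterm : ∀ (z : ℂ) (n : ℕ), ‖(A : ℂ) ^ n * z ^ 2 ^ A ^ n‖ =
      (A : ℝ) ^ n * ‖z‖ ^ 2 ^ A ^ n := by
    intro z n
    rw [norm_mul, norm_pow, norm_pow, Complex.norm_natCast]
  have hA2 : (2:ℝ) ≤ A := by exact_mod_cast hA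
  constructor
  · intro z hz
    have hz1 : ‖z‖ < 1 := mem_ball_zero_iff.mp hz
    apply Summable.of_norm
    have := key_summable A hA ‖z‖ (norm_nonneg z) hz1
    simpa [hterm] using this
  · refine ⟨6 * A, by linarith, ?_⟩
    intro z hz
    have hz1 : ‖z‖ < 1 := mem_ball_zero_iff.mp hz
    have hsn : Summable fun n : ℕ => ‖(A : ℂ) ^ n * z ^ 2 ^ A ^ n‖ := by
      have := key_summable A hA ‖z‖ (norm_nonneg z) hz1
      simpa [hterm] using this
    calc |(∑' n : ℕ, (A : ℂ) ^ n * z ^ 2 ^ A ^ n).re|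
        ≤ ‖∑' n : ℕ, (A : ℂ) ^ n * z ^ 2 ^ A ^ n‖ := by
          exact Complex.abs_re_le_norm _
      _ ≤ ∑' n : ℕ, ‖(A : ℂ) ^ n * z ^ 2 ^ A ^ n‖ := norm_tsum_le_tsum_norm hsn
      _ = ∑' n : ℕ, (A : ℝ) ^ n * ‖z‖ ^ 2 ^ A ^ n := tsum_congr fun n => hterm z n
      _ ≤ (6 * A) * Real.log (Real.exp 1 / (1 - ‖z‖)) :=
          key_bound A hA ‖z‖ (norm_nonneg z) hz1
end
end
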